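/- Let G be a simple graph on n vertices, let p be a prime, and let α be an integer column vector of length n such that W̃_Q(G)ᵀα ≡ 0 (mod p) entrywise. Then W̃_Q(G∘P₂)ᵀ(α, 0)ᵀ ≡ 0 (mod p) and W̃_Q(G∘P₂)ᵀ(0, α)ᵀ ≡ 0 (mod p), where (α,0)ᵀ and (0,α)ᵀ are the length-2n vectors whose two blocks are α and 0 (resp. 0 and α). -/

import Mathlib

open Matrix Polynomial BigOperators

/-- The signless Laplacian matrix `Q(G) = D(G) + A(G)` of a simple graph. -/
noncomputable def qMat (R : Type) [Ring R] {V : Type} [Fintype V] [DecidableEq V]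
    (G : SimpleGraph V) : Matrix V V R :=
  letI := Classical.decRel G.Adj
  G.degMatrix R + G.adjMatrix R

/-- The determinant of the Q-walk matrix `[e, Qe, …, Q^{m-1}e]` of a graph
(rows indexed by vertices via a fixed enumeration; well defined up to sign). -/
noncomputable def qWalkDet {V : Type} [Fintype V] [DecidableEq V] (G : SimpleGraph V) : ℝ :=
  Matrix.det (Matrix.of fun i j : Fin (Fintype.card V) =>
    ((qMat ℝ G ^ (j : ℕ)) *ᵥ (fun _ => (1 : ℝ))) ((Fintype.equivFin V).symm i))

/-- The rooted product `G ∘ P_k`: a pendant path on `k-1` extra vertices attached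
at each vertex of `G`; level `0` is the copy of `G`. -/
def rootedProd {V : Type} (G : SimpleGraph V) (k : ℕ) : SimpleGraph (V × Fin k) :=
  SimpleGraph.fromRel (fun a b =>
    (a.2 = b.2 ∧ (a.2 : ℕ) = 0 ∧ G.Adj a.1 b.1) ∨ (a.1 = b.1 ∧ (a.2 : ℕ) + 1 = (b.2 : ℕ)))

/-- A graph is determined by its generalized Q-spectrum. -/
def IsDGQS {V : Type} [Fintype V] [DecidableEq V] (G : SimpleGraph V) : Prop :=
  ∀ H : SimpleGraph V,
    (qMat ℝ H).charpoly = (qMat ℝ G).charpoly →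
    (qMat ℝ Hᶜ).charpoly = (qMat ℝ Gᶜ).charpoly →
    Nonempty (H ≃g G)


/-- The modified Q-walk matrix `W̃_Q = [e, Qe/2, Q²e/2, …, Q^{m-1}e/2]` (an integer
matrix: for `j ≥ 1` one has `Q^j e / 2 = Q^{j-1} d`, where `d` is the degree vector). -/
noncomputable def qWalkMod {V : Type} [Fintype V] [DecidableEq V] (G : SimpleGraph V) :
    Matrix V (Fin (Fintype.card V)) ℤ :=
  Matrix.of fun i j =>
    if (j : ℕ) = 0 then 1
    else ((qMat ℤ G ^ ((j : ℕ) - 1)) *ᵥ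
      (fun v => letI := Classical.decRel G.Adj; (G.degree v : ℤ))) i

namespace QWA
open SimpleGraph

set_option linter.unusedSectionVars false
set_option linter.unreachableTactic false
set_option linter.unusedTactic false
set_option maxHeartbeats 1000000

variable {V : Type} [Fintype V] [DecidableEq V]

lemma qMat_apply (H : SimpleGraph V) [inst : DecidableRel H.Adj] (u v : V) :
    qMat ℤ H u v = (if u = v then (H.degree u : ℤ) else 0) + (if H.Adj u v then 1 else 0) := by
  rw [qMat]
  rw [Subsingleton.elim (Classical.decRel H.Adj) inst]
  simp [degMatrix, Matrix.diagonal, adjMatrix_apply]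

lemma even_sum_sym (f : V → V → ℤ) (hs : ∀ u v, f u v = f v u) (hd : ∀ u, f u u = 0) :
    (2:ℤ) ∣ ∑ u, ∑ v, f u v := by
  have : ((∑ u, ∑ v, f u v : ℤ) : ZMod 2) = 0 := by
    push_cast
    rw [← Finset.sum_product']
    refine Finset.sum_ninvolution Prod.swap ?_ ?_ ?_ ?_
    · intro a
      rw [show f a.swap.1 a.swap.2 = f a.1 a.2 from hs a.2 a.1]
      exact CharTwo.add_self_eq_zero _
    · intro a hne hsw
      apply hne
      have h12 : a.2 = a.1 := congrArg Prod.fst hsw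
      rw [show a.1 = a.2 from h12.symm, hd]
      simp
    · intro a; exact Finset.mem_product.2 ⟨Finset.mem_univ _, Finset.mem_univ _⟩
    · intro a; simp
  exact (ZMod.intCast_zmod_eq_zero_iff_dvd _ 2).mp this


lemma even_quad (H : SimpleGraph V) [DecidableRel H.Adj] (x : V → ℤ) :
    (2:ℤ) ∣ x ⬝ᵥ (qMat ℤ H *ᵥ x) - (fun v => (H.degree v : ℤ)) ⬝ᵥ x := by
  have hexp : x ⬝ᵥ (qMat ℤ H *ᵥ x)
      = (∑ u, (H.degree u : ℤ) * (x u * x u))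
        + ∑ u, ∑ v, (if H.Adj u v then x u * x v else 0) := by
    simp only [dotProduct, mulVec, qMat_apply, add_mul, ite_mul, zero_mul, one_mul,
      Finset.sum_add_distrib, Finset.mul_sum, mul_ite, mul_zero, Finset.sum_ite_eq,
      Finset.mem_univ, if_true]
    rw [← Finset.sum_add_distrib]
    refine Finset.sum_congr rfl fun u _ => ?_
    rw [mul_add, Finset.mul_sum]
    simp only [mul_ite, mul_zero]
    ring_nf
  rw [hexp]
  have h1 : (2:ℤ) ∣ ∑ u, ∑ v, (if H.Adj u v then x u * x v else 0) := by
    refine even_sum_sym _ (fun u v => ?_) (fun u => ?_)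
    · by_cases h : H.Adj u v
      · rw [if_pos h, if_pos h.symm, mul_comm]
      · rw [if_neg h, if_neg (fun hh => h hh.symm)]
    · simp
  have h2 : (2:ℤ) ∣ (∑ u, (H.degree u : ℤ) * (x u * x u)) - (fun v => (H.degree v : ℤ)) ⬝ᵥ x := by
    simp only [dotProduct]
    rw [← Finset.sum_sub_distrib]
    refine Finset.dvd_sum fun u _ => ?_
    have : (H.degree u : ℤ) * (x u * x u) - (H.degree u : ℤ) * x u
        = (H.degree u : ℤ) * ((x u - 1) * ((x u - 1) + 1)) := by ring
    rw [this]
    exact Dvd.dvd.mul_left (Int.even_mul_succ_self (x u - 1)).two_dvd _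
  have := dvd_add h2 h1
  convert this using 1
  · rfl
  ring

lemma qMat_symm (H : SimpleGraph V) : (qMat ℤ H)ᵀ = qMat ℤ H := by
  letI := Classical.decRel H.Adj
  rw [qMat]
  rw [transpose_add, transpose_adjMatrix, (isSymm_degMatrix ℤ H : _ᵀ = _)]

lemma qMat_pow_symm (H : SimpleGraph V) (k : ℕ) : ((qMat ℤ H) ^ k)ᵀ = (qMat ℤ H) ^ k := by
  rw [transpose_pow, qMat_symm]

lemma dot_symm_pow (H : SimpleGraph V) (k : ℕ) (x y : V → ℤ) :
    ((qMat ℤ H ^ k) *ᵥ x) ⬝ᵥ y = x ⬝ᵥ ((qMat ℤ H ^ k) *ᵥ y) := by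
  rw [dotProduct_mulVec, ← mulVec_transpose, qMat_pow_symm, dotProduct_comm,
    dotProduct_mulVec, ← mulVec_transpose, qMat_pow_symm, dotProduct_comm]

lemma shift (H : SimpleGraph V) (a b : ℕ) (x y : V → ℤ) :
    ((qMat ℤ H ^ a) *ᵥ x) ⬝ᵥ ((qMat ℤ H ^ b) *ᵥ y) = x ⬝ᵥ ((qMat ℤ H ^ (a + b)) *ᵥ y) := by
  rw [dot_symm_pow, mulVec_mulVec, ← pow_add]

/-- row sums of qMat are twice the degrees -/
lemma qMat_mulVec_one (H : SimpleGraph V) [DecidableRel H.Adj] :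
    qMat ℤ H *ᵥ (fun _ => (1 : ℤ)) = fun v => 2 * (H.degree v : ℤ) := by
  funext v
  simp only [mulVec, dotProduct, qMat_apply, mul_one]
  rw [Finset.sum_add_distrib, ← degree_eq_sum_if_adj]
  simp [two_mul]

/-- reduce arbitrary powers to powers < card V via Cayley–Hamilton -/
lemma dvd_dot_pow_all (H : SimpleGraph V) (p : ℤ) (w α : V → ℤ)
    (h : ∀ i, i < Fintype.card V → p ∣ w ⬝ᵥ ((qMat ℤ H ^ i) *ᵥ α)) (k : ℕ) :
    p ∣ w ⬝ᵥ ((qMat ℤ H ^ k) *ᵥ α) := by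
  set Q := qMat ℤ H with hQ
  have hch : Q ^ k = aeval Q ((X : ℤ[X]) ^ k %ₘ Q.charpoly) := by
    have := Matrix.aeval_eq_aeval_mod_charpoly Q ((X : ℤ[X]) ^ k)
    simpa using this
  set r : ℤ[X] := (X : ℤ[X]) ^ k %ₘ Q.charpoly with hr
  let L : Matrix V V ℤ →ₗ[ℤ] ℤ :=
    { toFun := fun M => w ⬝ᵥ (M *ᵥ α)
      map_add' := by intro M N; simp [add_mulVec, dotProduct_add]
      map_smul' := by
        intro c M
        show w ⬝ᵥ ((c • M) *ᵥ α) = c • (w ⬝ᵥ (M *ᵥ α))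
        rw [smul_mulVec, dotProduct_smul] }
  have hL : ∀ M : Matrix V V ℤ, w ⬝ᵥ (M *ᵥ α) = L M := fun _ => rfl
  rw [hch, aeval_eq_sum_range, hL, map_sum]
  refine Finset.dvd_sum fun i _hi => ?_
  rw [LinearMap.map_smul]
  rcases eq_or_ne (r.coeff i) 0 with h0 | h0
  · simp [h0]
  · have hideg : i ≤ r.natDegree := le_natDegree_of_ne_zero h0
    have hrne : r ≠ 0 := fun hh => h0 (by simp [hh])
    have hdeg : r.natDegree < Fintype.card V := by
      have h1 : r.degree < Q.charpoly.degree :=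
        degree_modByMonic_lt _ (Matrix.charpoly_monic Q)
      rw [Matrix.charpoly_degree_eq_dim] at h1
      exact (natDegree_lt_iff_degree_lt hrne).2 h1
    have := h i (lt_of_le_of_lt hideg hdeg)
    rw [hL] at this
    rw [smul_eq_mul]
    exact this.mul_left _


section Core
set_option linter.unusedSectionVars false
variable (H : SimpleGraph V) [DecidableRel H.Adj] (p : ℕ) (hp : p.Prime) (α : V → ℤ)

/-- Core: from base congruences, all `e·Qᵏα` and `d·Qᵏα` are divisible by `p`. -/
lemma core (hp : p.Prime)
    (hE0 : (p:ℤ) ∣ (fun _ => (1:ℤ)) ⬝ᵥ α)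
    (hD0 : ∀ i, i + 1 < Fintype.card V →
      (p:ℤ) ∣ (fun v => (H.degree v : ℤ)) ⬝ᵥ ((qMat ℤ H ^ i) *ᵥ α)) :
    ∀ k, ((p:ℤ) ∣ (fun _ => (1:ℤ)) ⬝ᵥ ((qMat ℤ H ^ k) *ᵥ α)) ∧
      ((p:ℤ) ∣ (fun v => (H.degree v : ℤ)) ⬝ᵥ ((qMat ℤ H ^ k) *ᵥ α)) := by
  set Q := qMat ℤ H with hQdef
  set d : V → ℤ := fun v => (H.degree v : ℤ) with hd
  set e : V → ℤ := fun _ => (1:ℤ) with he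
  -- key step lemma: e · Q^{j+1} α = 2 * (d · Q^j α)
  have hstep : ∀ j, e ⬝ᵥ ((Q ^ (j+1)) *ᵥ α) = 2 * (d ⬝ᵥ ((Q ^ j) *ᵥ α)) := by
    intro j
    have h1 : (Q ^ (j+1)) *ᵥ α = Q *ᵥ ((Q ^ j) *ᵥ α) := by
      rw [mulVec_mulVec, ← pow_succ']
    rw [h1]
    rw [dotProduct_mulVec, ← mulVec_transpose, qMat_symm, qMat_mulVec_one]
    simp only [dotProduct, hd]
    rw [Finset.mul_sum]
    exact Finset.sum_congr rfl fun v _ => by ring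
  -- all e · Q^k α divisible
  have hE : ∀ k, (p:ℤ) ∣ e ⬝ᵥ ((Q ^ k) *ᵥ α) := by
    refine dvd_dot_pow_all H _ _ _ (fun i hi => ?_)
    cases i with
    | zero => simpa using hE0
    | succ j =>
      rw [hstep j]
      exact Dvd.dvd.mul_left (hD0 j hi) 2
  -- all d · Q^k α divisible
  have hD : ∀ k, (p:ℤ) ∣ d ⬝ᵥ ((Q ^ k) *ᵥ α) := by
    by_cases hp2 : p = 2
    · subst hp2
      -- quadratic argument
      have hAA : ∀ k, (2:ℤ) ∣ α ⬝ᵥ ((Q ^ k) *ᵥ α) := by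
        refine dvd_dot_pow_all H _ _ _ (fun i hi => ?_)
        rcases Nat.even_or_odd i with ⟨t, ht⟩ | ⟨t, ht⟩
        · -- i = 2t : α·Q^{2t}α = (Q^t α)·(Q^t α) ≡ e·(Q^t α) mod 2
          subst ht
          have hsplit : α ⬝ᵥ ((Q ^ (t+t)) *ᵥ α) = ((Q^t) *ᵥ α) ⬝ᵥ ((Q^t) *ᵥ α) := by
            rw [shift]
          rw [hsplit]
          have hsq : (2:ℤ) ∣ ((Q^t) *ᵥ α) ⬝ᵥ ((Q^t) *ᵥ α) - e ⬝ᵥ ((Q^t) *ᵥ α) := by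
            simp only [dotProduct, he, one_mul]
            rw [← Finset.sum_sub_distrib]
            refine Finset.dvd_sum fun v _ => ?_
            have : ((Q^t) *ᵥ α) v * ((Q^t) *ᵥ α) v - ((Q^t) *ᵥ α) v
                = (((Q^t) *ᵥ α) v - 1) * ((((Q^t) *ᵥ α) v - 1) + 1) := by ring
            rw [this]
            exact (Int.even_mul_succ_self _).two_dvd
          have := dvd_add hsq (hE t)
          simpa using this
        · -- i = 2t+1 : α·Q^{2t+1}α = (Q^t α)·Q·(Q^t α) ≡ d·Q^t α mod 2
          subst ht
          have hsplit : α ⬝ᵥ ((Q ^ (2*t+1)) *ᵥ α)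
              = ((Q^t) *ᵥ α) ⬝ᵥ (Q *ᵥ ((Q^t) *ᵥ α)) := by
            rw [show Q *ᵥ ((Q^t) *ᵥ α) = (Q^(1+t)) *ᵥ α by
              rw [mulVec_mulVec, ← pow_succ']
              ring_nf]
            rw [shift]
            congr 2
            ring
            rfl
          rw [hsplit]
          have hq := even_quad H ((Q^t) *ᵥ α)
          have hdt : (2:ℤ) ∣ d ⬝ᵥ ((Q^t) *ᵥ α) := by
            refine hD0 t ?_
            omega
          have := dvd_add hq hdt
          simpa [← hQdef, ← hd] using this
      intro k
      have hq := even_quad H ((Q^k) *ᵥ α)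
      have hform : ((Q^k) *ᵥ α) ⬝ᵥ (Q *ᵥ ((Q^k) *ᵥ α)) = α ⬝ᵥ ((Q^(k + (1+k))) *ᵥ α) := by
        rw [show Q *ᵥ ((Q^k) *ᵥ α) = (Q^(1+k)) *ᵥ α by rw [mulVec_mulVec, ← pow_succ']; ring_nf]
        rw [shift]
      rw [hform] at hq
      have := dvd_sub (hAA (k + (1+k))) hq
      simpa using this
    · -- odd prime
      intro k
      have h2 : (p:ℤ) ∣ 2 * (d ⬝ᵥ ((Q ^ k) *ᵥ α)) := by rw [← hstep k]; exact hE (k+1)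
      have hpZ : Prime (p:ℤ) := Nat.prime_iff_prime_int.mp hp
      rcases (hpZ.dvd_mul).1 h2 with h | h
      · exfalso
        have hdvd : p ∣ 2 := by exact_mod_cast h
        exact hp2 ((Nat.prime_dvd_prime_iff_eq hp Nat.prime_two).1 hdvd)
      · exact h
  exact fun k => ⟨hE k, hD k⟩

end Core

section Span
set_option linter.unusedSectionVars false
variable (H : SimpleGraph V) [DecidableRel H.Adj]

/-- span of all `Qᵏd` and `Qᵏe`. -/
noncomputable def krylov : Submodule ℤ (V → ℤ) := Submodule.span ℤ
  ((Set.range fun k : ℕ => (qMat ℤ H ^ k) *ᵥ (fun v => (H.degree v : ℤ))) ∪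
   (Set.range fun k : ℕ => (qMat ℤ H ^ k) *ᵥ (fun _ => (1:ℤ))))

lemma d_mem_krylov : (fun v => (H.degree v : ℤ)) ∈ krylov H := by
  apply Submodule.subset_span
  exact Or.inl ⟨0, by simp [one_mulVec]⟩

lemma e_mem_krylov : (fun _ => (1:ℤ)) ∈ krylov H := by
  apply Submodule.subset_span
  exact Or.inr ⟨0, by simp [one_mulVec]⟩

lemma mulVec_mem_krylov {x : V → ℤ} (hx : x ∈ krylov H) : (qMat ℤ H *ᵥ x) ∈ krylov H := by
  refine Submodule.span_induction ?_ ?_ ?_ ?_ hx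
  · rintro y (⟨k, rfl⟩ | ⟨k, rfl⟩)
    · exact Submodule.subset_span (Or.inl ⟨k+1, by rw [mulVec_mulVec, ← pow_succ']⟩)
    · exact Submodule.subset_span (Or.inr ⟨k+1, by rw [mulVec_mulVec, ← pow_succ']⟩)
  · simp [mulVec_zero, Submodule.zero_mem]
  · intro a b _ _ ha hb
    rw [mulVec_add]
    exact Submodule.add_mem _ ha hb
  · intro c a _ ha
    rw [mulVec_smul]
    exact Submodule.smul_mem _ _ ha

lemma dvd_dot_of_mem_krylov (p : ℕ) (hp : p.Prime) (α : V → ℤ)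
    (hE0 : (p:ℤ) ∣ (fun _ => (1:ℤ)) ⬝ᵥ α)
    (hD0 : ∀ i, i + 1 < Fintype.card V →
      (p:ℤ) ∣ (fun v => (H.degree v : ℤ)) ⬝ᵥ ((qMat ℤ H ^ i) *ᵥ α))
    {x : V → ℤ} (hx : x ∈ krylov H) : (p:ℤ) ∣ x ⬝ᵥ α := by
  have hcore := core H p α hp hE0 hD0
  refine Submodule.span_induction ?_ ?_ ?_ ?_ hx
  · rintro y (⟨k, rfl⟩ | ⟨k, rfl⟩)
    · rw [dot_symm_pow]
      exact (hcore k).2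
    · rw [dot_symm_pow]
      exact (hcore k).1
  · simp
  · intro a b _ _ ha hb
    rw [add_dotProduct]
    exact dvd_add ha hb
  · intro c a _ ha
    rw [smul_dotProduct]
    rw [smul_eq_mul]
    exact ha.mul_left _
 
end Span

lemma rp_adj (G : SimpleGraph V) (u v : V) (i j : Fin 2) :
    (rootedProd G 2).Adj (u,i) (v,j) ↔
      ((i : ℕ) = 0 ∧ (j : ℕ) = 0 ∧ G.Adj u v) ∨ (u = v ∧ i ≠ j) := by
  rw [rootedProd, SimpleGraph.fromRel_adj]
  fin_cases i <;> fin_cases j <;>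
    simp [Prod.ext_iff, G.adj_comm] <;>
    first
      | exact fun h => h.ne
      | exact eq_comm
      | skip


variable (G : SimpleGraph V) [DecidableRel G.Adj] [DecidableRel (rootedProd G 2).Adj]

lemma rp_degree_cast (u : V) (i : Fin 2) :
    ((rootedProd G 2).degree (u,i) : ℤ) = if (i:ℕ) = 0 then (G.degree u : ℤ) + 1 else 1 := by
  rw [degree_eq_sum_if_adj, Fintype.sum_prod_type]
  simp only [Fin.sum_univ_two, rp_adj]
  fin_cases i <;>
    simp [Finset.sum_add_distrib, Finset.sum_ite_eq, SimpleGraph.degree,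
      SimpleGraph.neighborFinset_eq_filter]

lemma qMat_rp_apply (u v : V) (i j : Fin 2) :
    qMat ℤ (rootedProd G 2) (u,i) (v,j) =
      (if (i:ℕ) = 0 ∧ (j:ℕ) = 0 then qMat ℤ G u v else 0) + (if u = v then 1 else 0) := by
  rw [qMat_apply (rootedProd G 2), qMat_apply G, rp_degree_cast]
  by_cases huv : u = v
  · subst huv
    fin_cases i <;> fin_cases j <;>
      simp [rp_adj, Prod.ext_iff, G.irrefl]
  · fin_cases i <;> fin_cases j <;>
      simp [rp_adj, Prod.ext_iff, huv]

lemma rp_mulVec_fst (z : V × Fin 2 → ℤ) (u : V) :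
    (qMat ℤ (rootedProd G 2) *ᵥ z) (u, 0) =
      (qMat ℤ G *ᵥ fun v => z (v,0)) u + (z (u,0) + z (u,1)) := by
  simp only [mulVec, dotProduct, Fintype.sum_prod_type, Fin.sum_univ_two, qMat_rp_apply]
  simp [add_mul, ite_mul, Finset.sum_add_distrib, Finset.sum_ite_eq, add_assoc]

lemma rp_mulVec_snd (z : V × Fin 2 → ℤ) (u : V) :
    (qMat ℤ (rootedProd G 2) *ᵥ z) (u, 1) = z (u,0) + z (u,1) := by
  simp only [mulVec, dotProduct, Fintype.sum_prod_type, Fin.sum_univ_two, qMat_rp_apply]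
  simp [add_mul, ite_mul, Finset.sum_add_distrib, Finset.sum_ite_eq]

end QWA

/-- If `W̃_Q(G)ᵀ α ≡ 0 (mod p)`, then
`W̃_Q(G∘P₂)ᵀ (α,0)ᵀ ≡ 0` and `W̃_Q(G∘P₂)ᵀ (0,α)ᵀ ≡ 0 (mod p)`. -/
theorem qWalkMod_rootedProd_two (n : ℕ) (G : SimpleGraph (Fin n)) (p : ℕ) (hp : p.Prime)
    (α : Fin n → ℤ) (hα : ∀ j, (p : ℤ) ∣ ((qWalkMod G)ᵀ *ᵥ α) j) :
    (∀ j, (p : ℤ) ∣ ((qWalkMod (rootedProd G 2))ᵀ *ᵥ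
        (fun v : Fin n × Fin 2 => if (v.2 : ℕ) = 0 then α v.1 else 0)) j) ∧
    (∀ j, (p : ℤ) ∣ ((qWalkMod (rootedProd G 2))ᵀ *ᵥ
        (fun v : Fin n × Fin 2 => if (v.2 : ℕ) = 1 then α v.1 else 0)) j) := by
  classical
  letI instG : DecidableRel G.Adj := Classical.decRel G.Adj
  letI instRP : DecidableRel (rootedProd G 2).Adj := Classical.decRel (rootedProd G 2).Adj
  rcases Nat.eq_zero_or_pos n with hn | hn
  · subst hn
    constructor <;> intro j <;> exact absurd j.isLt (by simp)
  -- notation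
  set Q : Matrix (Fin n) (Fin n) ℤ := qMat ℤ G with hQ
  set dv : Fin n → ℤ := fun v => (G.degree v : ℤ) with hdv
  set dhat : Fin n × Fin 2 → ℤ := fun w => ((rootedProd G 2).degree w : ℤ) with hdhat
  -- base fact: p ∣ eᵀα
  have hE0 : (p:ℤ) ∣ (fun _ => (1:ℤ)) ⬝ᵥ α := by
    have hcard : 0 < Fintype.card (Fin n) := by simpa using hn
    have h := hα ⟨0, hcard⟩
    have heq : ((qWalkMod G)ᵀ *ᵥ α) ⟨0, hcard⟩ = (fun _ => (1:ℤ)) ⬝ᵥ α := by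
      simp [qWalkMod, mulVec, dotProduct]
    rwa [heq] at h
  -- base fact: p ∣ dᵀQⁱα for i + 1 < n
  have hD0 : ∀ i, i + 1 < Fintype.card (Fin n) →
      (p:ℤ) ∣ (fun v => (G.degree v : ℤ)) ⬝ᵥ ((qMat ℤ G ^ i) *ᵥ α) := by
    intro i hi
    have h := hα ⟨i+1, hi⟩
    have heq : ((qWalkMod G)ᵀ *ᵥ α) ⟨i+1, hi⟩ = ((qMat ℤ G ^ i) *ᵥ dv) ⬝ᵥ α := by
      simp [qWalkMod, mulVec, dotProduct, hdv]
    rw [heq, QWA.dot_symm_pow] at h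
    exact h
  -- membership of the blocks of Q̂ᵏd̂ in the Krylov span
  have hmem : ∀ k : ℕ,
      ((fun u => ((qMat ℤ (rootedProd G 2) ^ k) *ᵥ dhat) (u, 0)) ∈ QWA.krylov G) ∧
      ((fun u => ((qMat ℤ (rootedProd G 2) ^ k) *ᵥ dhat) (u, 1)) ∈ QWA.krylov G) := by
    intro k
    induction k with
    | zero =>
      constructor
      · have heq : (fun u => ((qMat ℤ (rootedProd G 2) ^ 0) *ᵥ dhat) (u, 0))
            = (fun v => (G.degree v : ℤ)) + (fun _ => (1:ℤ)) := by
          funext u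
          simp [one_mulVec, hdhat, QWA.rp_degree_cast]
        rw [heq]
        exact Submodule.add_mem _ (QWA.d_mem_krylov G) (QWA.e_mem_krylov G)
      · have heq : (fun u => ((qMat ℤ (rootedProd G 2) ^ 0) *ᵥ dhat) (u, 1))
            = (fun _ => (1:ℤ)) := by
          funext u
          simp [one_mulVec, hdhat, QWA.rp_degree_cast]
        rw [heq]
        exact QWA.e_mem_krylov G
    | succ k ih =>
      have hsucc : (qMat ℤ (rootedProd G 2) ^ (k+1)) *ᵥ dhat
          = qMat ℤ (rootedProd G 2) *ᵥ ((qMat ℤ (rootedProd G 2) ^ k) *ᵥ dhat) := by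
        rw [mulVec_mulVec, ← pow_succ']
      constructor
      · have heq : (fun u => ((qMat ℤ (rootedProd G 2) ^ (k+1)) *ᵥ dhat) (u, 0))
            = (qMat ℤ G *ᵥ (fun v => ((qMat ℤ (rootedProd G 2) ^ k) *ᵥ dhat) (v, 0)))
              + ((fun u => ((qMat ℤ (rootedProd G 2) ^ k) *ᵥ dhat) (u, 0))
                + (fun u => ((qMat ℤ (rootedProd G 2) ^ k) *ᵥ dhat) (u, 1))) := by
          funext u
          rw [hsucc]
          simp only [Pi.add_apply]
          exact QWA.rp_mulVec_fst G _ u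
        rw [heq]
        exact Submodule.add_mem _ (QWA.mulVec_mem_krylov G ih.1)
          (Submodule.add_mem _ ih.1 ih.2)
      · have heq : (fun u => ((qMat ℤ (rootedProd G 2) ^ (k+1)) *ᵥ dhat) (u, 1))
            = ((fun u => ((qMat ℤ (rootedProd G 2) ^ k) *ᵥ dhat) (u, 0))
                + (fun u => ((qMat ℤ (rootedProd G 2) ^ k) *ᵥ dhat) (u, 1))) := by
          funext u
          rw [hsucc]
          simp only [Pi.add_apply]
          exact QWA.rp_mulVec_snd G _ u
        rw [heq]
        exact Submodule.add_mem _ ih.1 ih.2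
  -- the two conclusions
  have main : ∀ β : Fin n × Fin 2 → ℤ, (∀ u : Fin n, β (u, 0) = α u) →
      (∀ u : Fin n, β (u, 1) = 0) →
      ∀ j, (p : ℤ) ∣ ((qWalkMod (rootedProd G 2))ᵀ *ᵥ β) j := by
    intro β hb0 hb1 j
    have hexp : ((qWalkMod (rootedProd G 2))ᵀ *ᵥ β) j
        = ∑ w : Fin n × Fin 2, qWalkMod (rootedProd G 2) w j * β w := by
      simp [mulVec, dotProduct]
    rw [hexp]
    by_cases hj : (j : ℕ) = 0
    · have heq : ∑ w : Fin n × Fin 2, qWalkMod (rootedProd G 2) w j * β w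
          = (fun _ => (1:ℤ)) ⬝ᵥ α := by
        simp only [qWalkMod, Matrix.of_apply, hj, if_true, one_mul,
          Fintype.sum_prod_type, Fin.sum_univ_two, hb0, hb1, dotProduct]
        simp
      rw [heq]
      exact hE0
    · have heq : ∑ w : Fin n × Fin 2, qWalkMod (rootedProd G 2) w j * β w
          = (fun u => ((qMat ℤ (rootedProd G 2) ^ ((j:ℕ) - 1)) *ᵥ dhat) (u, 0)) ⬝ᵥ α := by
        simp only [qWalkMod, Matrix.of_apply, hj, if_false,
          Fintype.sum_prod_type, Fin.sum_univ_two, hb0, hb1, dotProduct, mul_zero, add_zero, hdhat]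
      rw [heq]
      exact QWA.dvd_dot_of_mem_krylov G p hp α hE0 hD0 (hmem ((j:ℕ) - 1)).1
  have main2 : ∀ β : Fin n × Fin 2 → ℤ, (∀ u : Fin n, β (u, 0) = 0) →
      (∀ u : Fin n, β (u, 1) = α u) →
      ∀ j, (p : ℤ) ∣ ((qWalkMod (rootedProd G 2))ᵀ *ᵥ β) j := by
    intro β hb0 hb1 j
    have hexp : ((qWalkMod (rootedProd G 2))ᵀ *ᵥ β) j
        = ∑ w : Fin n × Fin 2, qWalkMod (rootedProd G 2) w j * β w := by
      simp [mulVec, dotProduct]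
    rw [hexp]
    by_cases hj : (j : ℕ) = 0
    · have heq : ∑ w : Fin n × Fin 2, qWalkMod (rootedProd G 2) w j * β w
          = (fun _ => (1:ℤ)) ⬝ᵥ α := by
        simp only [qWalkMod, Matrix.of_apply, hj, if_true, one_mul,
          Fintype.sum_prod_type, Fin.sum_univ_two, hb0, hb1, dotProduct]
        simp
      rw [heq]
      exact hE0
    · have heq : ∑ w : Fin n × Fin 2, qWalkMod (rootedProd G 2) w j * β w
          = (fun u => ((qMat ℤ (rootedProd G 2) ^ ((j:ℕ) - 1)) *ᵥ dhat) (u, 1)) ⬝ᵥ α := by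
        simp only [qWalkMod, Matrix.of_apply, hj, if_false,
          Fintype.sum_prod_type, Fin.sum_univ_two, hb0, hb1, dotProduct, mul_zero, zero_add, hdhat]
      rw [heq]
      exact QWA.dvd_dot_of_mem_krylov G p hp α hE0 hD0 (hmem ((j:ℕ) - 1)).2
  constructor
  · exact main _ (fun u => by simp) (fun u => by simp)
  · exact main2 _ (fun u => by simp) (fun u => by simp)
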